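/- Let (Y_i)_{i=1}^n be an i.i.d. sample from a distribution with mean m, variance v > 0, finite fourth moment, and kurtosis E[(Y − m)⁴]/v² not greater than κ. Then for any ε ∈ (0, 1/2), the empirical mean M = (1/n) Σ_{i=1}^n Y_i satisfies, with probability at least 1 − 2ε: |M − m| ≤ ((3(n−1) + κ)/(2 n ε))^{1/4} √(v/n). -/

import Mathlib

open MeasureTheory ProbabilityTheory

private lemma aux_integrable_pow_le {Ω : Type*} [MeasurableSpace Ω] {P : Measure Ω}
    [IsProbabilityMeasure P] {A : Ω → ℝ} (hA : Measurable A)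
    (h4 : Integrable (fun ω => A ω ^ 4) P) {k : ℕ} (hk : k ≤ 4) :
    Integrable (fun ω => A ω ^ k) P := by
  refine (h4.add (integrable_const 1)).mono (hA.pow_const k).aestronglyMeasurable ?_
  filter_upwards with ω
  have h4n : (0:ℝ) ≤ A ω ^ 4 := by positivity
  have habs : |A ω| ^ k ≤ |A ω| ^ 4 + 1 := by
    rcases le_total (|A ω|) 1 with h | h
    · have h1 : |A ω| ^ k ≤ 1 := pow_le_one₀ (abs_nonneg _) h
      have h2 : (0:ℝ) ≤ |A ω| ^ 4 := by positivity
      linarith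
    · have h1 : |A ω| ^ k ≤ |A ω| ^ 4 := pow_le_pow_right₀ h hk
      linarith
  calc ‖A ω ^ k‖ = |A ω| ^ k := by rw [Real.norm_eq_abs, abs_pow]
    _ ≤ |A ω| ^ 4 + 1 := habs
    _ = A ω ^ 4 + 1 := by rw [← abs_pow, abs_of_nonneg h4n]
    _ ≤ ‖A ω ^ 4 + 1‖ := le_abs_self _

/-- Expansion of moments of a sum of two independent centered random variables. -/
private lemma aux_step {Ω : Type*} [MeasurableSpace Ω] {P : Measure Ω}
    [IsProbabilityMeasure P] {A B : Ω → ℝ} (hAmeas : Measurable A) (hBmeas : Measurable B)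
    (hAB : IndepFun A B P)
    (iA4 : Integrable (fun ω => A ω ^ 4) P) (iB4 : Integrable (fun ω => B ω ^ 4) P)
    (hA1 : ∫ ω, A ω ∂P = 0) (hB1 : ∫ ω, B ω ∂P = 0) :
    Integrable (fun ω => (A ω + B ω) ^ 4) P ∧
    (∫ ω, (A ω + B ω) ∂P = 0) ∧
    (∫ ω, (A ω + B ω) ^ 2 ∂P = (∫ ω, A ω ^ 2 ∂P) + ∫ ω, B ω ^ 2 ∂P) ∧
    (∫ ω, (A ω + B ω) ^ 4 ∂P =
      (∫ ω, A ω ^ 4 ∂P) + 6 * ((∫ ω, A ω ^ 2 ∂P) * ∫ ω, B ω ^ 2 ∂P) + ∫ ω, B ω ^ 4 ∂P) := by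
  have iA1 : Integrable A P := by
    simpa using aux_integrable_pow_le hAmeas iA4 (k := 1) (by norm_num)
  have iA2 : Integrable (fun ω => A ω ^ 2) P := aux_integrable_pow_le hAmeas iA4 (by norm_num)
  have iA3 : Integrable (fun ω => A ω ^ 3) P := aux_integrable_pow_le hAmeas iA4 (by norm_num)
  have iB1 : Integrable B P := by
    simpa using aux_integrable_pow_le hBmeas iB4 (k := 1) (by norm_num)
  have iB2 : Integrable (fun ω => B ω ^ 2) P := aux_integrable_pow_le hBmeas iB4 (by norm_num)
  have iB3 : Integrable (fun ω => B ω ^ 3) P := aux_integrable_pow_le hBmeas iB4 (by norm_num)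
  have hA3B : IndepFun (fun ω => A ω ^ 3) B P :=
    hAB.comp (measurable_id.pow_const 3) measurable_id
  have hA2B2 : IndepFun (fun ω => A ω ^ 2) (fun ω => B ω ^ 2) P :=
    hAB.comp (measurable_id.pow_const 2) (measurable_id.pow_const 2)
  have hAB3 : IndepFun A (fun ω => B ω ^ 3) P :=
    hAB.comp measurable_id (measurable_id.pow_const 3)
  have iA3B : Integrable (fun ω => A ω ^ 3 * B ω) P := hA3B.integrable_mul iA3 iB1
  have iA2B2 : Integrable (fun ω => A ω ^ 2 * B ω ^ 2) P := hA2B2.integrable_mul iA2 iB2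
  have iAB3 : Integrable (fun ω => A ω * B ω ^ 3) P := hAB3.integrable_mul iA1 iB3
  have iAB : Integrable (fun ω => A ω * B ω) P := hAB.integrable_mul iA1 iB1
  have eA3B : ∫ ω, A ω ^ 3 * B ω ∂P = 0 := by
    have h := hA3B.integral_mul_eq_mul_integral iA3.aestronglyMeasurable iB1.aestronglyMeasurable
    calc ∫ ω, A ω ^ 3 * B ω ∂P = (∫ ω, A ω ^ 3 ∂P) * ∫ ω, B ω ∂P := h
      _ = 0 := by rw [hB1, mul_zero]
  have eAB3 : ∫ ω, A ω * B ω ^ 3 ∂P = 0 := by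
    have h := hAB3.integral_mul_eq_mul_integral iA1.aestronglyMeasurable iB3.aestronglyMeasurable
    calc ∫ ω, A ω * B ω ^ 3 ∂P = (∫ ω, A ω ∂P) * ∫ ω, B ω ^ 3 ∂P := h
      _ = 0 := by rw [hA1, zero_mul]
  have eAB : ∫ ω, A ω * B ω ∂P = 0 := by
    have h := hAB.integral_mul_eq_mul_integral iA1.aestronglyMeasurable iB1.aestronglyMeasurable
    calc ∫ ω, A ω * B ω ∂P = (∫ ω, A ω ∂P) * ∫ ω, B ω ∂P := h
      _ = 0 := by rw [hA1, zero_mul]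
  have eA2B2 : ∫ ω, A ω ^ 2 * B ω ^ 2 ∂P = (∫ ω, A ω ^ 2 ∂P) * ∫ ω, B ω ^ 2 ∂P :=
    hA2B2.integral_mul_eq_mul_integral iA2.aestronglyMeasurable iB2.aestronglyMeasurable
  have hexp4 : (fun ω => (A ω + B ω) ^ 4) = fun ω =>
      A ω ^ 4 + (4 * (A ω ^ 3 * B ω) + (6 * (A ω ^ 2 * B ω ^ 2) +
        (4 * (A ω * B ω ^ 3) + B ω ^ 4))) := funext fun ω => by ring
  have i_rest3 : Integrable (fun ω => 4 * (A ω * B ω ^ 3) + B ω ^ 4) P :=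
    (iAB3.const_mul 4).add iB4
  have i_rest2 : Integrable (fun ω => 6 * (A ω ^ 2 * B ω ^ 2) +
      (4 * (A ω * B ω ^ 3) + B ω ^ 4)) P := (iA2B2.const_mul 6).add i_rest3
  have i_rest1 : Integrable (fun ω => 4 * (A ω ^ 3 * B ω) + (6 * (A ω ^ 2 * B ω ^ 2) +
      (4 * (A ω * B ω ^ 3) + B ω ^ 4))) P := (iA3B.const_mul 4).add i_rest2
  have hint4 : Integrable (fun ω => (A ω + B ω) ^ 4) P := by
    rw [hexp4]; exact iA4.add i_rest1
  refine ⟨hint4, ?_, ?_, ?_⟩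
  · have h : ∫ ω, (A ω + B ω) ∂P = (∫ ω, A ω ∂P) + ∫ ω, B ω ∂P := integral_add iA1 iB1
    rw [h, hA1, hB1, add_zero]
  · have hexp2 : (fun ω => (A ω + B ω) ^ 2) = fun ω =>
        A ω ^ 2 + (2 * (A ω * B ω) + B ω ^ 2) := funext fun ω => by ring
    have s1 : ∫ ω, (A ω ^ 2 + (2 * (A ω * B ω) + B ω ^ 2)) ∂P =
        (∫ ω, A ω ^ 2 ∂P) + ∫ ω, (2 * (A ω * B ω) + B ω ^ 2) ∂P :=
      integral_add iA2 ((iAB.const_mul 2).add iB2)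
    have s2 : ∫ ω, (2 * (A ω * B ω) + B ω ^ 2) ∂P =
        (∫ ω, 2 * (A ω * B ω) ∂P) + ∫ ω, B ω ^ 2 ∂P :=
      integral_add (iAB.const_mul 2) iB2
    have s3 : ∫ ω, 2 * (A ω * B ω) ∂P = 2 * ∫ ω, A ω * B ω ∂P := integral_const_mul 2 _
    rw [hexp2, s1, s2, s3, eAB]
    ring
  · have s1 : ∫ ω, (A ω ^ 4 + (4 * (A ω ^ 3 * B ω) + (6 * (A ω ^ 2 * B ω ^ 2) +
        (4 * (A ω * B ω ^ 3) + B ω ^ 4)))) ∂P =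
        (∫ ω, A ω ^ 4 ∂P) + ∫ ω, (4 * (A ω ^ 3 * B ω) + (6 * (A ω ^ 2 * B ω ^ 2) +
        (4 * (A ω * B ω ^ 3) + B ω ^ 4))) ∂P := integral_add iA4 i_rest1
    have s2 : ∫ ω, (4 * (A ω ^ 3 * B ω) + (6 * (A ω ^ 2 * B ω ^ 2) +
        (4 * (A ω * B ω ^ 3) + B ω ^ 4))) ∂P =
        (∫ ω, 4 * (A ω ^ 3 * B ω) ∂P) + ∫ ω, (6 * (A ω ^ 2 * B ω ^ 2) +
        (4 * (A ω * B ω ^ 3) + B ω ^ 4)) ∂P := integral_add (iA3B.const_mul 4) i_rest2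
    have s3 : ∫ ω, (6 * (A ω ^ 2 * B ω ^ 2) + (4 * (A ω * B ω ^ 3) + B ω ^ 4)) ∂P =
        (∫ ω, 6 * (A ω ^ 2 * B ω ^ 2) ∂P) + ∫ ω, (4 * (A ω * B ω ^ 3) + B ω ^ 4) ∂P :=
      integral_add (iA2B2.const_mul 6) i_rest3
    have s4 : ∫ ω, (4 * (A ω * B ω ^ 3) + B ω ^ 4) ∂P =
        (∫ ω, 4 * (A ω * B ω ^ 3) ∂P) + ∫ ω, B ω ^ 4 ∂P := integral_add (iAB3.const_mul 4) iB4
    have m1 : ∫ ω, 4 * (A ω ^ 3 * B ω) ∂P = 4 * ∫ ω, A ω ^ 3 * B ω ∂P := integral_const_mul 4 _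
    have m2 : ∫ ω, 6 * (A ω ^ 2 * B ω ^ 2) ∂P = 6 * ∫ ω, A ω ^ 2 * B ω ^ 2 ∂P :=
      integral_const_mul 6 _
    have m3 : ∫ ω, 4 * (A ω * B ω ^ 3) ∂P = 4 * ∫ ω, A ω * B ω ^ 3 ∂P := integral_const_mul 4 _
    rw [hexp4, s1, s2, s3, s4, m1, m2, m3, eA3B, eAB3, eA2B2]
    ring

private lemma fourth_moment_sum {Ω : Type*} [MeasurableSpace Ω] (P : Measure Ω)
    [IsProbabilityMeasure P] {n : ℕ} {X : Fin n → Ω → ℝ} (hXmeas : ∀ i, Measurable (X i))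
    (hindep : iIndepFun X P)
    (v μ4 : ℝ) (hv : 0 ≤ v) (hμ4 : 0 ≤ μ4)
    (h1 : ∀ i, ∫ ω, X i ω ∂P = 0)
    (h2 : ∀ i, ∫ ω, (X i ω) ^ 2 ∂P = v)
    (h4 : ∀ i, ∫ ω, (X i ω) ^ 4 ∂P = μ4)
    (hint4 : ∀ i, Integrable (fun ω => (X i ω) ^ 4) P)
    (s : Finset (Fin n)) :
    Integrable (fun ω => (∑ i ∈ s, X i ω) ^ 4) P ∧
    (∫ ω, (∑ i ∈ s, X i ω) ∂P = 0) ∧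
    (∫ ω, (∑ i ∈ s, X i ω) ^ 2 ∂P ≤ s.card * v) ∧
    (∫ ω, (∑ i ∈ s, X i ω) ^ 4 ∂P ≤
      s.card * μ4 + 3 * s.card * (s.card - 1) * v ^ 2) := by
  classical
  induction s using Finset.induction_on with
  | empty =>
    refine ⟨by simp, by simp, by simp, by simp⟩
  | @insert i s hi IH =>
    obtain ⟨iS4, eS1, eS2, eS4⟩ := IH
    have hSmeas : Measurable (fun ω => ∑ j ∈ s, X j ω) :=
      Finset.measurable_sum s (fun j _ => hXmeas j)
    have hBS : IndepFun (X i) (fun ω => ∑ j ∈ s, X j ω) P := by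
      have h := (hindep.indepFun_finsetSum_of_notMem hXmeas hi).symm
      have hfun : (∑ j ∈ s, X j) = (fun ω => ∑ j ∈ s, X j ω) := by
        funext ω; simp
      rwa [hfun] at h
    obtain ⟨I4, E1, E2, E4⟩ := aux_step (hXmeas i) hSmeas hBS (hint4 i) iS4 (h1 i) eS1
    have hcard : ((insert i s).card : ℝ) = (s.card : ℝ) + 1 := by
      rw [Finset.card_insert_of_notMem hi]; push_cast; ring
    refine ⟨?_, ?_, ?_, ?_⟩
    · simp only [Finset.sum_insert hi]; exact I4
    · simp only [Finset.sum_insert hi]; exact E1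
    · simp only [Finset.sum_insert hi]
      rw [E2, h2 i, hcard]
      linarith [eS2]
    · simp only [Finset.sum_insert hi]
      rw [E4, h4 i, h2 i, hcard]
      set c : ℝ := (s.card : ℝ)
      have hc : 0 ≤ c := Nat.cast_nonneg _
      have h6 : (∫ ω, (∑ j ∈ s, X j ω) ^ 2 ∂P) * v ≤ (c * v) * v := by
        apply mul_le_mul_of_nonneg_right eS2 hv
      nlinarith [eS4, h6, sq_nonneg v, mul_nonneg hc hv]

set_option maxHeartbeats 1000000 in
theorem empirical_mean_fourth_moment_chebyshev
    {Ω : Type*} [MeasurableSpace Ω] (P : Measure Ω) [IsProbabilityMeasure P]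
    (n : ℕ) (hn : 0 < n) (Y : Fin n → Ω → ℝ) (hYmeas : ∀ i, Measurable (Y i))
    (μ : Measure ℝ) [IsProbabilityMeasure μ]
    (hindep : iIndepFun Y P)
    (hid : ∀ i, Measure.map (Y i) P = μ)
    (hL4 : Integrable (fun y => y ^ 4) μ)
    (m v : ℝ) (hm : m = ∫ y, y ∂μ) (hv : v = ∫ y, (y - m) ^ 2 ∂μ) (hvpos : 0 < v)
    (κ : ℝ) (hκ : (∫ y, (y - m) ^ 4 ∂μ) / v ^ 2 ≤ κ)
    (ε : ℝ) (hε : ε ∈ Set.Ioo (0 : ℝ) (1 / 2)) :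
    ENNReal.ofReal (1 - 2 * ε) ≤
      P {ω | |(1 / n) * (∑ i, Y i ω) - m| ≤
        ((3 * ((n : ℝ) - 1) + κ) / (2 * n * ε)) ^ ((1 : ℝ) / 4) * Real.sqrt (v / n)} := by
  obtain ⟨hε0, hε2⟩ := hε
  have hnpos : (0:ℝ) < n := by exact_mod_cast hn
  -- moments of μ
  set μ4 : ℝ := ∫ y, (y - m) ^ 4 ∂μ with hμ4def
  have hg4meas : Measurable (fun y : ℝ => (y - m) ^ 4) := (measurable_id.sub_const m).pow_const 4
  have hg2meas : Measurable (fun y : ℝ => (y - m) ^ 2) := (measurable_id.sub_const m).pow_const 2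
  have hg4 : Integrable (fun y => (y - m) ^ 4) μ := by
    have h8 : Integrable (fun y => 8 * y ^ 4 + 8 * m ^ 4) μ :=
      (hL4.const_mul 8).add (integrable_const _)
    refine h8.mono hg4meas.aestronglyMeasurable ?_
    filter_upwards with y
    have h1 : (y - m) ^ 4 ≤ 8 * y ^ 4 + 8 * m ^ 4 := by
      nlinarith [sq_nonneg (y + m), sq_nonneg (y - m), sq_nonneg (y ^ 2 - m ^ 2),
        sq_nonneg (y * m), sq_nonneg (y ^ 2 + m ^ 2), sq_nonneg y, sq_nonneg m]
    have h2 : (0:ℝ) ≤ (y - m) ^ 4 := by positivity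
    have h3 : (0:ℝ) ≤ 8 * y ^ 4 + 8 * m ^ 4 := by positivity
    rw [Real.norm_eq_abs, Real.norm_eq_abs, abs_of_nonneg h2, abs_of_nonneg h3]
    exact h1
  have hg2 : Integrable (fun y => (y - m) ^ 2) μ := by
    have := aux_integrable_pow_le (measurable_id.sub_const m)
      (by simpa using hg4) (k := 2) (by norm_num)
    simpa using this
  have hμ4nonneg : 0 ≤ μ4 := integral_nonneg fun y => by positivity
  -- v ^ 2 ≤ μ4, hence 1 ≤ κ
  have hv2le : v ^ 2 ≤ μ4 := by
    have hIexp : (fun y => ((y - m) ^ 2 - v) ^ 2) =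
        fun y => ((y - m) ^ 4 - (2 * v) * (y - m) ^ 2) + v ^ 2 := funext fun y => by ring
    have hI : Integrable (fun y => ((y - m) ^ 2 - v) ^ 2) μ := by
      rw [hIexp]; exact (hg4.sub (hg2.const_mul (2 * v))).add (integrable_const _)
    have h0 : 0 ≤ ∫ y, ((y - m) ^ 2 - v) ^ 2 ∂μ := integral_nonneg fun y => sq_nonneg _
    have hcalc : ∫ y, ((y - m) ^ 2 - v) ^ 2 ∂μ = μ4 - 2 * v * v + v ^ 2 := by
      have s1 : ∫ y, (((y - m) ^ 4 - (2 * v) * (y - m) ^ 2) + v ^ 2) ∂μ =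
          (∫ y, ((y - m) ^ 4 - (2 * v) * (y - m) ^ 2) ∂μ) + ∫ _y : ℝ, v ^ 2 ∂μ :=
        integral_add (hg4.sub (hg2.const_mul (2 * v))) (integrable_const _)
      have s2 : ∫ y, ((y - m) ^ 4 - (2 * v) * (y - m) ^ 2) ∂μ =
          (∫ y, (y - m) ^ 4 ∂μ) - ∫ y, (2 * v) * (y - m) ^ 2 ∂μ :=
        integral_sub hg4 (hg2.const_mul (2 * v))
      have s3 : ∫ y, (2 * v) * (y - m) ^ 2 ∂μ = (2 * v) * ∫ y, (y - m) ^ 2 ∂μ :=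
        integral_const_mul _ _
      rw [hIexp, s1, s2, s3, integral_const]
      simp only [probReal_univ, smul_eq_mul, one_mul]
      rw [← hv, ← hμ4def]
    rw [hcalc] at h0; nlinarith
  have hκ1 : 1 ≤ κ := by
    have h1 : (1:ℝ) ≤ μ4 / v ^ 2 := (one_le_div (by positivity)).mpr hv2le
    linarith [hκ]
  have hμ4κ : μ4 ≤ κ * v ^ 2 := (div_le_iff₀ (by positivity)).mp hκ
  -- centered variables
  set X : Fin n → Ω → ℝ := fun i ω => Y i ω - m with hXdef
  have hXmeas : ∀ i, Measurable (X i) := fun i => (hYmeas i).sub_const m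
  have hindepX : iIndepFun X P :=
    hindep.comp (fun _ => fun y => y - m) (fun _ => measurable_id.sub_const m)
  have key_transfer : ∀ (i : Fin n) (g : ℝ → ℝ), Measurable g →
      ∫ ω, g (Y i ω) ∂P = ∫ y, g y ∂μ := by
    intro i g hg
    rw [← hid i, integral_map (hYmeas i).aemeasurable hg.aestronglyMeasurable]
  have transfer_int : ∀ (i : Fin n) (g : ℝ → ℝ), Measurable g → Integrable g μ →
      Integrable (fun ω => g (Y i ω)) P := by
    intro i g hg hgi
    have h2 : Integrable g (Measure.map (Y i) P) := by rw [hid i]; exact hgi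
    exact (integrable_map_measure hg.aestronglyMeasurable (hYmeas i).aemeasurable).mp h2
  have hid1 : Integrable (fun y : ℝ => y) μ := by
    simpa using aux_integrable_pow_le measurable_id hL4 (k := 1) (by norm_num)
  have hX1 : ∀ i, ∫ ω, X i ω ∂P = 0 := by
    intro i
    have h := key_transfer i (fun y => y - m) (measurable_id.sub_const m)
    rw [hXdef]
    simp only
    rw [h, integral_sub hid1 (integrable_const m), integral_const]
    simp only [probReal_univ, smul_eq_mul, one_mul]
    rw [← hm]; ring
  have hX2 : ∀ i, ∫ ω, (X i ω) ^ 2 ∂P = v := by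
    intro i
    have h := key_transfer i (fun y => (y - m) ^ 2) hg2meas
    rw [hXdef]; simp only; rw [h, ← hv]
  have hX4 : ∀ i, ∫ ω, (X i ω) ^ 4 ∂P = μ4 := by
    intro i
    have h := key_transfer i (fun y => (y - m) ^ 4) hg4meas
    rw [hXdef]; simp only; rw [h, ← hμ4def]
  have hXint4 : ∀ i, Integrable (fun ω => (X i ω) ^ 4) P := by
    intro i
    have := transfer_int i (fun y => (y - m) ^ 4) hg4meas hg4
    exact this
  -- fourth moment of the sum
  obtain ⟨Iint, -, -, Ibound⟩ := fourth_moment_sum P hXmeas hindepX v μ4 hvpos.le hμ4nonneg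
    hX1 hX2 hX4 hXint4 Finset.univ
  have hcardn : ((Finset.univ : Finset (Fin n)).card : ℝ) = (n : ℝ) := by simp
  rw [hcardn] at Ibound
  -- the threshold
  set c : ℝ := (3 * ((n : ℝ) - 1) + κ) / (2 * n * ε) with hcdef
  set t : ℝ := c ^ ((1 : ℝ) / 4) * Real.sqrt (v / n) with htdef
  have hnum : (0:ℝ) < 3 * ((n : ℝ) - 1) + κ := by
    have h1 : (1:ℝ) ≤ n := by exact_mod_cast hn
    linarith
  have hcpos : 0 < c := div_pos hnum (by positivity)
  have hvn : (0:ℝ) < v / n := div_pos hvpos hnpos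
  have htpos : 0 < t := by
    apply mul_pos (Real.rpow_pos_of_pos hcpos _) (Real.sqrt_pos.mpr hvn)
  have ht4 : t ^ 4 = c * (v / n) ^ 2 := by
    rw [htdef, mul_pow]
    have h1 : (c ^ ((1:ℝ)/4)) ^ (4:ℕ) = c := by
      rw [← Real.rpow_natCast (c ^ ((1:ℝ)/4)) 4, ← Real.rpow_mul hcpos.le]
      norm_num
    have h2 : (Real.sqrt (v / n)) ^ (4:ℕ) = (v / n) ^ 2 := by
      rw [show (4:ℕ) = 2 * 2 from rfl, pow_mul, Real.sq_sqrt hvn.le]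
    rw [h1, h2]
  set a : ℝ := ((n : ℝ) * t) ^ 4 with hadef
  have hapos : 0 < a := by positivity
  -- Markov's inequality
  set S : Ω → ℝ := fun ω => ∑ i, X i ω with hSdef
  have markov := mul_meas_ge_le_integral_of_nonneg
    (μ := P) (f := fun ω => (S ω) ^ 4) (ae_of_all _ fun ω => by positivity) Iint a
  have hEbound : ∫ ω, (S ω) ^ 4 ∂P ≤ 2 * ε * a := by
    have h2εa : 2 * ε * a = (n:ℝ) * (3 * ((n : ℝ) - 1) + κ) * v ^ 2 := by
      rw [hadef, mul_pow, ht4, hcdef]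
      field_simp
    rw [h2εa]
    have h1 : (n:ℝ) * μ4 ≤ (n:ℝ) * (κ * v ^ 2) :=
      mul_le_mul_of_nonneg_left hμ4κ hnpos.le
    nlinarith [Ibound]
  have hPbad : (P {ω | a ≤ (S ω) ^ 4}).toReal ≤ 2 * ε := by
    have h := le_trans markov hEbound
    rw [measureReal_def] at h
    have h2 : a * (P {ω | a ≤ (S ω) ^ 4}).toReal ≤ a * (2 * ε) := by linarith
    exact le_of_mul_le_mul_left h2 hapos
  have hPbad' : P {ω | a ≤ (S ω) ^ 4} ≤ ENNReal.ofReal (2 * ε) := by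
    rw [← ENNReal.ofReal_toReal (measure_ne_top P _)]
    exact ENNReal.ofReal_le_ofReal hPbad
  -- the event and its complement
  set E : Set Ω := {ω | |(1 / n : ℝ) * (∑ i, Y i ω) - m| ≤ t} with hEdef
  have hMS : ∀ ω : Ω, (1 / n : ℝ) * (∑ i, Y i ω) - m = (1 / n : ℝ) * S ω := by
    intro ω
    rw [hSdef]
    simp only [hXdef]
    rw [Finset.sum_sub_distrib, Finset.sum_const, Finset.card_univ, Fintype.card_fin]
    field_simp
    rw [nsmul_eq_mul]
  have hsubset : Eᶜ ⊆ {ω | a ≤ (S ω) ^ 4} := by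
    intro ω hω
    simp only [hEdef, Set.mem_compl_iff, Set.mem_setOf_eq, not_le] at hω
    have habs : |(1 / n : ℝ) * S ω| = |S ω| / n := by
      rw [abs_mul, abs_of_pos (by positivity : (0:ℝ) < 1 / (n:ℝ))]
      field_simp
    rw [hMS ω, habs] at hω
    have hnt : (n:ℝ) * t < |S ω| := by
      rw [lt_div_iff₀ hnpos] at hω; linarith
    have hnt0 : (0:ℝ) ≤ (n:ℝ) * t := by positivity
    have h4 : ((n:ℝ) * t) ^ 4 ≤ |S ω| ^ 4 := by
      apply pow_le_pow_left₀ hnt0 hnt.le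
    simp only [Set.mem_setOf_eq, hadef]
    calc ((n:ℝ) * t) ^ 4 ≤ |S ω| ^ 4 := h4
      _ = (S ω) ^ 4 := by rw [← abs_pow, abs_of_nonneg (by positivity : (0:ℝ) ≤ (S ω)^4)]
  have hPcompl : P Eᶜ ≤ ENNReal.ofReal (2 * ε) := le_trans (measure_mono hsubset) hPbad'
  -- conclude
  have hunion : (1 : ENNReal) ≤ P E + P Eᶜ := by
    have := measure_union_le (μ := P) E Eᶜ
    rw [Set.union_compl_self, measure_univ] at this
    exact this
  have hkey : ENNReal.ofReal (1 - 2 * ε) + ENNReal.ofReal (2 * ε) ≤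
      P E + ENNReal.ofReal (2 * ε) := by
    rw [← ENNReal.ofReal_add (by linarith) (by linarith)]
    have h1 : (1 - 2 * ε) + 2 * ε = 1 := by ring
    rw [h1, ENNReal.ofReal_one]
    exact le_trans hunion (add_le_add le_rfl hPcompl)
  have := (ENNReal.add_le_add_iff_right (by exact ENNReal.ofReal_ne_top)).mp hkey
  exact this
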